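/- With P, Q = Id − P, T, χ_J, 𝒯 and 𝒦 as in the context: (i) for every n ≥ 1 and each macrostate I, the function P T (Q T)^{n−1} χ_J is constant on the set of augmented states whose macrostate coordinate is I, so that 𝒦_{IJ}(n) is well defined; and (ii) the matrix Mori–Zwanzig equation 𝒯(n) = Σ_{m=1}^{n} 𝒦(m)·𝒯(n−m) holds for every n ≥ 1, where the product is matrix multiplication over the finite macrostate index set. (Theorem 2 of the paper.) -/

import Mathlib

open MeasureTheory ProbabilityTheory

noncomputable section

namespace Stmt14Aux

variable {Ω : Type*} [MeasurableSpace Ω]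

/-- A bounded measurable real observable. -/
def Nice (f : Ω → ℝ) : Prop := Measurable f ∧ ∃ C, ∀ z, |f z| ≤ C

lemma Nice.integrable {f : Ω → ℝ} (hf : Nice f) (μ : Measure Ω) [IsProbabilityMeasure μ] :
    Integrable f μ := by
  obtain ⟨hm, C, hC⟩ := hf
  exact (integrable_const C).mono' hm.aestronglyMeasurable
    (Filter.Eventually.of_forall fun z => by simpa [Real.norm_eq_abs] using hC z)

lemma Nice.sub {f g : Ω → ℝ} (hf : Nice f) (hg : Nice g) : Nice (f - g) := by
  obtain ⟨hfm, C, hC⟩ := hf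
  obtain ⟨hgm, D, hD⟩ := hg
  refine ⟨hfm.sub hgm, C + D, fun z => ?_⟩
  calc |f z - g z| ≤ |f z| + |g z| := abs_sub _ _
    _ ≤ C + D := add_le_add (hC z) (hD z)

lemma Nice.comp {Ω' : Type*} [MeasurableSpace Ω'] {f : Ω → ℝ} (hf : Nice f)
    {e : Ω' → Ω} (he : Measurable e) : Nice (fun w => f (e w)) := by
  obtain ⟨hm, C, hC⟩ := hf
  exact ⟨hm.comp he, C, fun z => hC _⟩

variable {κ : Kernel Ω Ω} [IsMarkovKernel κ] {T : (Ω → ℝ) → (Ω → ℝ)}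

lemma nice_T (hT : ∀ f z, T f z = ∫ y, f y ∂(κ z)) {f : Ω → ℝ} (hf : Nice f) :
    Nice (T f) := by
  obtain ⟨hm, C, hC⟩ := hf
  have hfun : T f = fun z => ∫ y, f y ∂(κ z) := funext (hT f)
  constructor
  · rw [hfun]
    exact ((hm.comp measurable_snd).stronglyMeasurable.integral_kernel_prod_right'
      (κ := κ)).measurable
  · refine ⟨C, fun z => ?_⟩
    rw [hT f z]
    calc |∫ y, f y ∂(κ z)| ≤ ∫ y, |f y| ∂(κ z) := by
          simpa [Real.norm_eq_abs] using norm_integral_le_integral_norm (μ := κ z) f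
      _ ≤ ∫ _, C ∂(κ z) := by
          refine integral_mono (Nice.integrable ⟨hm, C, hC⟩ (κ z)).abs
            (integrable_const C) hC
      _ = C := by simp

lemma T_sum (hT : ∀ f z, T f z = ∫ y, f y ∂(κ z)) {α : Type*} (s : Finset α)
    (c : α → ℝ) (g : α → Ω → ℝ) (hg : ∀ i ∈ s, Nice (g i)) (z : Ω) :
    T (fun w => ∑ i ∈ s, c i * g i w) z = ∑ i ∈ s, c i * T (g i) z := by
  rw [hT]
  rw [integral_finset_sum s (fun i hi => ((hg i hi).integrable (κ z)).const_mul (c i))]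
  refine Finset.sum_congr rfl fun i hi => ?_
  rw [integral_const_mul, hT]

lemma T_add (hT : ∀ f z, T f z = ∫ y, f y ∂(κ z)) {f g : Ω → ℝ}
    (hf : Nice f) (hg : Nice g) (z : Ω) :
    T (fun w => f w + g w) z = T f z + T g z := by
  rw [hT, integral_add (hf.integrable (κ z)) (hg.integrable (κ z)), hT, hT]

end Stmt14Aux

open Stmt14Aux

theorem stmt_14
    {E : Type*} [MeasurableSpace E]
    {ι : Type*} [Fintype ι] [Nonempty ι] [DecidableEq ι]
    [MeasurableSpace ι] [MeasurableSingletonClass ι]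
    (τ : ι → ℕ) (η : ι → Measure E) (hη : ∀ I, IsProbabilityMeasure (η I))
    (κ : Kernel (E × ι × ℕ) (E × ι × ℕ)) [IsMarkovKernel κ]
    (T : ((E × ι × ℕ) → ℝ) → ((E × ι × ℕ) → ℝ))
    (hT : ∀ f z, T f z = ∫ y, f y ∂(κ z))
    (P : ((E × ι × ℕ) → ℝ) → ((E × ι × ℕ) → ℝ))
    (hP : ∀ f (x : E) (I : ι) (s : ℕ), P f (x, I, s) = ∫ z, f (z, I, τ I) ∂(η I))
    (Q : ((E × ι × ℕ) → ℝ) → ((E × ι × ℕ) → ℝ))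
    (hQ : ∀ f, Q f = f - P f)
    (χ : ι → (E × ι × ℕ) → ℝ)
    (hχ : ∀ (J : ι) (x : E) (I : ι) (s : ℕ), χ J (x, I, s) = if I = J then 1 else 0)
    (𝒯 : ℕ → Matrix ι ι ℝ)
    (h𝒯 : ∀ n (I J : ι), 𝒯 n I J = ∫ z, (T^[n] (χ J)) (z, I, τ I) ∂(η I))
    (𝒦 : ℕ → Matrix ι ι ℝ)
    (h𝒦 : ∀ n, 1 ≤ n → ∀ (I J : ι),
      𝒦 n I J = ∫ z, (T (((Q ∘ T)^[n - 1]) (χ J))) (z, I, τ I) ∂(η I)) :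
    (∀ n, 1 ≤ n → ∀ (I J : ι) (x : E) (s : ℕ),
        (P (T (((Q ∘ T)^[n - 1]) (χ J)))) (x, I, s) = 𝒦 n I J) ∧
    (∀ n, 1 ≤ n → 𝒯 n = ∑ m ∈ Finset.Icc 1 n, 𝒦 m * 𝒯 (n - m)) := by
  classical
  haveI : ∀ I, IsProbabilityMeasure (η I) := hη
  -- basic Nice facts
  have hχn : ∀ J, Nice (χ J) := by
    intro J
    have hχe : χ J = fun z : E × ι × ℕ => if z.2.1 = J then (1:ℝ) else 0 := by
      funext z; obtain ⟨x, I, s⟩ := z; exact hχ J x I s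
    rw [hχe]
    refine ⟨Measurable.ite ?_ measurable_const measurable_const, 1, fun z => ?_⟩
    · exact (measurable_fst.comp measurable_snd) (measurableSet_singleton J)
    · dsimp only; split <;> simp
  have heval : ∀ (I : ι), Measurable (fun z : E => (z, I, τ I)) :=
    fun I => measurable_id.prodMk measurable_const
  have hInt : ∀ {g : (E × ι × ℕ) → ℝ}, Nice g → ∀ I : ι,
      Integrable (fun z : E => g (z, I, τ I)) (η I) :=
    fun {g} hg I => Nice.integrable (hg.comp (heval I)) (η I)
  have hPn : ∀ {g}, Nice g → Nice (P g) := by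
    intro g hg
    have hPe : P g = fun z : E × ι × ℕ => ∫ w, g (w, z.2.1, τ z.2.1) ∂(η z.2.1) := by
      funext z; obtain ⟨x, I, s⟩ := z; exact hP g x I s
    obtain ⟨hm, C, hC⟩ := hg
    constructor
    · rw [hPe]
      exact (measurable_of_countable (fun I : ι => ∫ w, g (w, I, τ I) ∂(η I))).comp
        (measurable_fst.comp measurable_snd)
    · refine ⟨C, fun z => ?_⟩
      obtain ⟨x, I, s⟩ := z
      rw [hP g x I s]
      calc |∫ w, g (w, I, τ I) ∂(η I)| ≤ ∫ w, |g (w, I, τ I)| ∂(η I) := by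
            simpa [Real.norm_eq_abs] using
              norm_integral_le_integral_norm (μ := η I) (fun w => g (w, I, τ I))
        _ ≤ ∫ _, C ∂(η I) := integral_mono (hInt ⟨hm, C, hC⟩ I).abs (integrable_const C)
              (fun w => hC _)
        _ = C := by simp
  have hQn : ∀ {g}, Nice g → Nice (Q g) := fun {g} hg => by
    rw [hQ]; exact hg.sub (hPn hg)
  have hTn : ∀ {g}, Nice g → Nice (T g) := fun {g} hg => nice_T hT hg
  have hGn : ∀ m J, Nice ((Q ∘ T)^[m] (χ J)) := by
    intro m J
    induction m with
    | zero => simpa using hχn J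
    | succ m ih =>
      rw [Function.iterate_succ_apply']
      exact hQn (hTn ih)
  have hTGn : ∀ m J, Nice (T ((Q ∘ T)^[m] (χ J))) := fun m J => hTn (hGn m J)
  -- expansion of P
  have hPexp : ∀ (g : (E × ι × ℕ) → ℝ),
      P g = fun z => ∑ L : ι, (∫ w, g (w, L, τ L) ∂(η L)) * χ L z := by
    intro g
    funext z
    obtain ⟨x, I, s⟩ := z
    rw [hP g x I s]
    have h1 : ∀ L : ι, (∫ w, g (w, L, τ L) ∂(η L)) * χ L (x, I, s)
        = if I = L then (∫ w, g (w, L, τ L) ∂(η L)) else 0 := by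
      intro L; rw [hχ L x I s]; split <;> simp
    rw [Finset.sum_congr rfl fun L _ => h1 L]
    simp
  -- 𝒯 0 is the identity matrix
  have h𝒯0 : ∀ L J : ι, 𝒯 0 L J = if L = J then 1 else 0 := by
    intro L J
    rw [h𝒯 0 L J]
    simp only [Function.iterate_zero, id_eq]
    have h1 : (fun z : E => χ J (z, L, τ L)) = fun _ => if L = J then (1:ℝ) else 0 := by
      funext z; exact hχ J z L (τ L)
    rw [h1, integral_const]
    simp
  -- shifting sums over Icc 1 k to range k
  have hshift : ∀ (k : ℕ) (F : ℕ → ℝ),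
      ∑ m ∈ Finset.Icc 1 k, F m = ∑ i ∈ Finset.range k, F (i + 1) := by
    intro k F
    induction k with
    | zero => simp
    | succ k ih => rw [Finset.sum_Icc_succ_top (by omega), ih, Finset.sum_range_succ]
  -- Mori-Zwanzig (entrywise) follows from the expansion of T^[n] (χ J)
  have hMZC : ∀ n, 1 ≤ n →
      (∀ (J : ι) (z : E × ι × ℕ), T^[n] (χ J) z
        = ∑ m ∈ Finset.Icc 1 n, ∑ L : ι, 𝒯 (n - m) L J * T ((Q ∘ T)^[m - 1] (χ L)) z) →
      ∀ I J : ι, 𝒯 n I J = ∑ m ∈ Finset.Icc 1 n, ∑ L : ι, 𝒦 m I L * 𝒯 (n - m) L J := by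
    intro n hn hCn I J
    rw [h𝒯 n I J]
    have h1 : (fun z : E => T^[n] (χ J) (z, I, τ I))
        = fun z => ∑ m ∈ Finset.Icc 1 n, ∑ L : ι,
            𝒯 (n - m) L J * T ((Q ∘ T)^[m - 1] (χ L)) (z, I, τ I) := by
      funext z; exact hCn J (z, I, τ I)
    have hint : ∀ m ∈ Finset.Icc 1 n, Integrable (fun z : E => ∑ L : ι,
        𝒯 (n - m) L J * T ((Q ∘ T)^[m - 1] (χ L)) (z, I, τ I)) (η I) :=
      fun m _ => integrable_finset_sum _ (fun L _ => (hInt (hTGn (m-1) L) I).const_mul _)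
    rw [h1, integral_finset_sum _ hint]
    refine Finset.sum_congr rfl fun m hm => ?_
    rw [integral_finset_sum _ (fun L _ => ((hInt (hTGn (m-1) L) I).const_mul _))]
    refine Finset.sum_congr rfl fun L _ => ?_
    rw [integral_const_mul, ← h𝒦 m (Finset.mem_Icc.mp hm).1 I L]
    ring
  -- the key expansion
  have hC : ∀ n, 1 ≤ n → ∀ (J : ι) (z : E × ι × ℕ), T^[n] (χ J) z
      = ∑ m ∈ Finset.Icc 1 n, ∑ L : ι, 𝒯 (n - m) L J * T ((Q ∘ T)^[m - 1] (χ L)) z := by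
    intro n hn
    induction n, hn using Nat.le_induction with
    | base =>
      intro J z
      simp only [Finset.Icc_self, Finset.sum_singleton, Nat.sub_self,
        Function.iterate_one, Function.iterate_zero, id_eq]
      simp [h𝒯0, ite_mul]
    | succ n hn ih =>
      have hMZ := hMZC n hn ih
      have hMZ' : ∀ I J : ι, 𝒯 n I J
          = ∑ i ∈ Finset.range n, ∑ L : ι, 𝒦 (i+1) I L * 𝒯 (n - (i+1)) L J := by
        intro I J
        rw [hMZ I J, hshift]
      intro J z
      -- per-term expansion of T ∘ T
      have hterm : ∀ (i : ℕ) (L : ι),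
          T (T ((Q ∘ T)^[i] (χ L))) z
            = (∑ L' : ι, 𝒦 (i+1) L' L * T (χ L') z) + T ((Q ∘ T)^[i+1] (χ L)) z := by
        intro i L
        set g := T ((Q ∘ T)^[i] (χ L)) with hg
        have hgn : Nice g := hTGn i L
        have hsplit : g = fun w => P g w + Q g w := by
          funext w; rw [hQ]; simp
        have hQg : Q g = (Q ∘ T)^[i+1] (χ L) := by
          rw [Function.iterate_succ_apply']; rfl
        have hPg : P g = fun w => ∑ L' : ι, 𝒦 (i+1) L' L * χ L' w := by
          rw [hPexp g]
          funext w
          refine Finset.sum_congr rfl fun L' _ => ?_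
          rw [h𝒦 (i+1) (by omega) L' L]
          simp only [Nat.add_sub_cancel]
          rfl
        calc T g z = T (fun w => P g w + Q g w) z := by rw [← hsplit]
          _ = T (P g) z + T (Q g) z := T_add hT (hPn hgn) (hQn hgn) z
          _ = (∑ L' : ι, 𝒦 (i+1) L' L * T (χ L') z) + T ((Q ∘ T)^[i+1] (χ L)) z := by
              rw [hQg, hPg, T_sum hT Finset.univ _ _ (fun L' _ => hχn L') z]
      have hfun : T^[n] (χ J) = fun w => ∑ p ∈ Finset.Icc 1 n ×ˢ (Finset.univ : Finset ι),
          𝒯 (n - p.1) p.2 J * T ((Q ∘ T)^[p.1 - 1] (χ p.2)) w := by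
        funext w
        rw [ih J w, ← Finset.sum_product']
      have key2 : ∑ i ∈ Finset.range n, ∑ L : ι, 𝒯 (n - (i+1)) L J *
            (∑ L' : ι, 𝒦 (i+1) L' L * T (χ L') z)
          = ∑ L' : ι, 𝒯 n L' J * T (χ L') z := by
        calc ∑ i ∈ Finset.range n, ∑ L : ι, 𝒯 (n - (i+1)) L J *
              (∑ L' : ι, 𝒦 (i+1) L' L * T (χ L') z)
            = ∑ i ∈ Finset.range n, ∑ L : ι, ∑ L' : ι,
                (𝒦 (i+1) L' L * 𝒯 (n - (i+1)) L J) * T (χ L') z := by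
              refine Finset.sum_congr rfl fun i _ => Finset.sum_congr rfl fun L _ => ?_
              rw [Finset.mul_sum]
              exact Finset.sum_congr rfl fun L' _ => by ring
          _ = ∑ i ∈ Finset.range n, ∑ L' : ι, ∑ L : ι,
                (𝒦 (i+1) L' L * 𝒯 (n - (i+1)) L J) * T (χ L') z :=
              Finset.sum_congr rfl fun i _ => Finset.sum_comm
          _ = ∑ L' : ι, ∑ i ∈ Finset.range n, ∑ L : ι,
                (𝒦 (i+1) L' L * 𝒯 (n - (i+1)) L J) * T (χ L') z := Finset.sum_comm
          _ = ∑ L' : ι, 𝒯 n L' J * T (χ L') z := by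
              refine Finset.sum_congr rfl fun L' _ => ?_
              rw [hMZ' L' J, Finset.sum_mul]
              exact Finset.sum_congr rfl fun i _ => by rw [Finset.sum_mul]
      calc T^[n+1] (χ J) z
          = T (T^[n] (χ J)) z := by rw [Function.iterate_succ_apply']
        _ = ∑ p ∈ Finset.Icc 1 n ×ˢ (Finset.univ : Finset ι),
              𝒯 (n - p.1) p.2 J * T (T ((Q ∘ T)^[p.1 - 1] (χ p.2))) z := by
            rw [hfun]; exact T_sum hT _ _ _ (fun p _ => hTGn (p.1 - 1) p.2) z
        _ = ∑ m ∈ Finset.Icc 1 n, ∑ L : ι,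
              𝒯 (n - m) L J * T (T ((Q ∘ T)^[m - 1] (χ L))) z := by
            rw [Finset.sum_product]
        _ = ∑ i ∈ Finset.range n, ∑ L : ι,
              𝒯 (n - (i+1)) L J * T (T ((Q ∘ T)^[i] (χ L))) z := hshift n _
        _ = ∑ i ∈ Finset.range n, ∑ L : ι, 𝒯 (n - (i+1)) L J *
              ((∑ L' : ι, 𝒦 (i+1) L' L * T (χ L') z) + T ((Q ∘ T)^[i+1] (χ L)) z) := by
            refine Finset.sum_congr rfl fun i _ => Finset.sum_congr rfl fun L _ => ?_
            rw [hterm i L]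
        _ = (∑ i ∈ Finset.range n, ∑ L : ι,
              𝒯 (n - (i+1)) L J * T ((Q ∘ T)^[i+1] (χ L)) z)
            + ∑ L' : ι, 𝒯 n L' J * T (χ L') z := by
            rw [← key2, ← Finset.sum_add_distrib]
            refine Finset.sum_congr rfl fun i _ => ?_
            rw [← Finset.sum_add_distrib]
            refine Finset.sum_congr rfl fun L _ => ?_
            ring
        _ = ∑ i ∈ Finset.range (n+1),
              ∑ L : ι, 𝒯 (n + 1 - (i+1)) L J * T ((Q ∘ T)^[i+1-1] (χ L)) z := by
            rw [Finset.sum_range_succ']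
            congr 1
            · refine Finset.sum_congr rfl fun i _ => Finset.sum_congr rfl fun L _ => ?_
              have h2 : n + 1 - (i + 1 + 1) = n - (i + 1) := by omega
              have h3 : i + 1 + 1 - 1 = i + 1 := by omega
              rw [h2, h3]
        _ = ∑ m ∈ Finset.Icc 1 (n+1), ∑ L : ι,
              𝒯 (n + 1 - m) L J * T ((Q ∘ T)^[m - 1] (χ L)) z := by
            rw [hshift (n+1)]
  -- conclusion
  constructor
  · intro n hn I J x s
    rw [hP _ x I s, h𝒦 n hn I J]
  · intro n hn
    ext I J
    have h1 := hMZC n hn (hC n hn) I J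
    rw [h1]
    rw [Matrix.sum_apply]
    refine Finset.sum_congr rfl fun m _ => ?_
    rw [Matrix.mul_apply]
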